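/- Let μ and μ* be deterministic environments that are m-counterfactually equivalent, with history maps f_s : Π₀ → H_m for s ∈ S and f_{s*} : Π₀ → H_m for s* ∈ S*, fibers F(f) = {s ∈ S : f_s = f} and F*(f) = {s* ∈ S* : f_{s*} = f}, and constants p_s ∈ [0,1] for s ∈ S. Define, for each s* ∈ F*(f_s) with T₀*(s*) ≠ 0 and ∑_{s'∈F(f_s)} T₀(s') > 0, p_{s*} = (∑_{s'∈F(f_s)} T₀(s') p_{s'}) / (∑_{s'∈F(f_s)} T₀(s')). Then for every s ∈ S: ∑_{s*∈F*(f_s)} T₀*(s*) p_{s*} = ∑_{s'∈F(f_s)} T₀(s') p_{s'}. -/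

import Mathlib

open scoped Classical
open Finset

/-- A POMDP without reward function ("environment"): finite sets of states, actions,
observations, a transition kernel `T`, an initial distribution `T0` and an
observation kernel `Obs`, all given as (row-)stochastic matrices of reals. -/
structure Env (S A O : Type) [Fintype S] [Fintype A] [Fintype O] where
  T : S → A → S → ℝ
  T0 : S → ℝ
  Obs : S → O → ℝ
  T_nonneg : ∀ s a s', 0 ≤ T s a s'
  T_sum : ∀ s a, ∑ s', T s a s' = 1
  T0_nonneg : ∀ s, 0 ≤ T0 s
  T0_sum : ∑ s, T0 s = 1
  Obs_nonneg : ∀ s o, 0 ≤ Obs s o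
  Obs_sum : ∀ s, ∑ o, Obs s o = 1

/-- A history `o₀a₁o₁…a_t o_t` is an initial observation together with a list of
action–observation pairs, stored in *reverse chronological order* (newest pair first). -/
abbrev Hist (A O : Type) := O × List (A × O)

/-- `HPrefix h h'` : the history `h` is an initial segment of `h'` (or equal to it). -/
def HPrefix {A O : Type} (h h' : Hist A O) : Prop := h.1 = h'.1 ∧ h.2 <:+ h'.2

/-- A policy maps histories to probability distributions over actions. -/
structure Policy (A O : Type) [Fintype A] where
  act : Hist A O → A → ℝ
  nonneg : ∀ h a, 0 ≤ act h a
  sum_one : ∀ h, ∑ a, act h a = 1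

/-- A deterministic policy: each output distribution is a point mass. -/
def Policy.IsDet {A O : Type} [Fintype A] (π : Policy A O) : Prop :=
  ∀ h, ∃ a, ∀ a', π.act h a' = if a' = a then 1 else 0

variable {S S' S'' A O : Type}

/-- Joint probability of a history together with the final state:
`histStateProb μ π o₀ l s` is the probability under `μ` and `π` of seeing the history
`(o₀, l)` and the state after the last observation being `s`. -/
noncomputable def histStateProb [Fintype S] [Fintype A] [Fintype O]
    (μ : Env S A O) (π : Policy A O) (o0 : O) : List (A × O) → S → ℝ
  | [], s => μ.T0 s * μ.Obs s o0
  | (a, o) :: rest, s =>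
      π.act (o0, rest) a * (∑ s', histStateProb μ π o0 rest s' * μ.T s' a s) * μ.Obs s o

/-- `μ(h | π)`: the probability of the history `h` under policy `π`:
`μ(o₀a₁o₁…a_t o_t | π) = ∑_{s₀…s_t} T₀(s₀)Obs(o₀|s₀)∏_k Obs(o_k|s_k)T(s_k|s_{k-1},a_k)π(a_k|…)`. -/
noncomputable def histProb [Fintype S] [Fintype A] [Fintype O]
    (μ : Env S A O) (π : Policy A O) (h : Hist A O) : ℝ :=
  ∑ s, histStateProb μ π h.1 h.2 s

/-- `μ(h' | h, π)`: conditional probability of a history given another, via Bayes' rule;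
set to `0` when `h` is not an initial segment of `h'` or the conditioning event has
probability `0`. -/
noncomputable def condProb [Fintype S] [Fintype A] [Fintype O]
    (μ : Env S A O) (π : Policy A O) (h h' : Hist A O) : ℝ :=
  if HPrefix h h' ∧ histProb μ π h ≠ 0 then histProb μ π h' / histProb μ π h else 0

/-- `m`-equivalence: all conditional probabilities of histories of length `≤ m`
coincide, for all policies. -/
def MEquiv [Fintype S] [Fintype S'] [Fintype A] [Fintype O]
    (μ : Env S A O) (μ' : Env S' A O) (m : ℕ) : Prop :=
  ∀ (π : Policy A O) (h h' : Hist A O), h.2.length ≤ m → h'.2.length ≤ m →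
    condProb μ π h h' = condProb μ' π h h'

/-- A deterministic environment policy of length `m`: a triple `(T̂₀, T̂, Ô)` with
`T̂₀ ∈ S`, `T̂ : S × A × {1,…,m} → S` (here `Fin m` with value `i` standing for turn `i+1`)
and `Ô : S × {0,…,m} → O`. -/
abbrev EnvPol (S A O : Type) (m : ℕ) := S × (S → A → Fin m → S) × (S → Fin (m + 1) → O)

/-- `μ(π_μ) = T₀(T̂₀) ⬝ ∏_{s,a,i} T(T̂(s,a,i)|s,a) ⬝ ∏_{s,i} Obs(Ô(s,i)|s)`. -/
noncomputable def envPolProb [Fintype S] [Fintype A] [Fintype O]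
    (μ : Env S A O) {m : ℕ} (ep : EnvPol S A O m) : ℝ :=
  μ.T0 ep.1 *
    ((∏ s, ∏ a, ∏ i, μ.T s a (ep.2.1 s a i)) * ∏ s, ∏ i, μ.Obs s (ep.2.2 s i))

/-- The state reached by following the environment policy `ep` along the actions of the
(reverse chronological) action–observation list: `s₀ = T̂₀`, `s_k = T̂(s_{k-1}, a_k, k)`. -/
def epState {m : ℕ} (ep : EnvPol S A O m) : List (A × O) → S
  | [] => ep.1
  | (a, _) :: rest =>
      if h : rest.length < m then ep.2.1 (epState ep rest) a ⟨rest.length, h⟩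
      else epState ep rest

/-- `μ(h | π_μ, π)`: the probability of the history `h = (o₀, l)` when the dynamics are
determined by the environment policy `ep` and the actions are drawn from `π`; it is
`∏_k π(a_k | h_{k-1})` if the observations of `h` match those generated by `ep` along the
actions of `h`, and `0` otherwise. -/
noncomputable def epHistProb {m : ℕ} [Fintype A] (ep : EnvPol S A O m) (π : Policy A O)
    (o0 : O) : List (A × O) → ℝ
  | [] => if ep.2.2 ep.1 0 = o0 then 1 else 0
  | (a, o) :: rest =>
      epHistProb ep π o0 rest * π.act (o0, rest) a *
        (if h : rest.length < m then
          (if ep.2.2 (ep.2.1 (epState ep rest) a ⟨rest.length, h⟩)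
              ⟨rest.length + 1, by omega⟩ = o then 1 else 0)
         else 0)

/-- `m`-counterfactual equivalence: for every finite collection `(h_{t_i}, π_i)` of
history–policy pairs with all `t_i ≤ m`,
`∑_{π_μ} μ(π_μ) ∏_i μ(h_{t_i}|π_μ,π_i) = ∑_{π_{μ'}} μ'(π_{μ'}) ∏_i μ'(h_{t_i}|π_{μ'},π_i)`. -/
def MCounterEquiv [Fintype S] [DecidableEq S] [Fintype S'] [DecidableEq S']
    [Fintype A] [DecidableEq A] [Fintype O]
    (μ : Env S A O) (μ' : Env S' A O) (m : ℕ) : Prop :=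
  ∀ (n : ℕ) (hs : Fin n → Hist A O) (πs : Fin n → Policy A O),
    (∀ i, (hs i).2.length ≤ m) →
    (∑ ep : EnvPol S A O m, envPolProb μ ep * ∏ i, epHistProb ep (πs i) (hs i).1 (hs i).2)
      = ∑ ep : EnvPol S' A O m, envPolProb μ' ep * ∏ i, epHistProb ep (πs i) (hs i).1 (hs i).2

/-- A deterministic environment: every transition and observation distribution is a
point mass. -/
def IsDetEnv [Fintype S] [Fintype A] [Fintype O] (μ : Env S A O) : Prop :=
  (∀ s a, ∃ s', ∀ s'', μ.T s a s'' = if s'' = s' then 1 else 0) ∧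
  (∀ s, ∃ o, ∀ o', μ.Obs s o' = if o' = o then 1 else 0)

/-- `μ(h | s₀ = s, π)` (probability of the history conditional on the initial state),
with the final state summed out below. -/
noncomputable def histStateProbFrom [Fintype S] [Fintype A] [Fintype O]
    (μ : Env S A O) (π : Policy A O) (s0 : S) (o0 : O) : List (A × O) → S → ℝ
  | [], s => (if s = s0 then 1 else 0) * μ.Obs s o0
  | (a, o) :: rest, s =>
      π.act (o0, rest) a *
        (∑ s', histStateProbFrom μ π s0 o0 rest s' * μ.T s' a s) * μ.Obs s o

/-- `μ(h | s₀ = s, π)`. -/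
noncomputable def histProbFrom [Fintype S] [Fintype A] [Fintype O]
    (μ : Env S A O) (π : Policy A O) (s0 : S) (h : Hist A O) : ℝ :=
  ∑ s, histStateProbFrom μ π s0 h.1 h.2 s

/-- The posterior `μ(s₀ = s | h)` over the initial state given a history, computed by
Bayes' rule from any policy `π` with `μ(h|π) > 0` (it is independent of the choice of
such a policy), and set to `0` if no such policy exists. -/
noncomputable def posterior [Fintype S] [Fintype A] [Fintype O]
    (μ : Env S A O) (h : Hist A O) (s : S) : ℝ :=
  if hex : ∃ π : Policy A O, 0 < histProb μ π h then
    μ.T0 s * histProbFrom μ hex.choose s h /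
      ∑ s', μ.T0 s' * histProbFrom μ hex.choose s' h
  else 0

/-- Given `m`, a pure learning process on `μ` is a map `P` from histories of length `≤ m`
to `[0,1]` realized, on some deterministic environment `μ'` that is `m`-counterfactually
equivalent to `μ`, as `P(h) = ∑_{s'} p_{s'} μ'(s₀ = s' | h)` for constants `p_{s'} ∈ [0,1]`. -/
def IsPureLearning [Fintype S] [DecidableEq S] [Fintype A] [DecidableEq A] [Fintype O]
    (μ : Env S A O) (m : ℕ) (P : Hist A O → ℝ) : Prop :=
  (∀ h : Hist A O, h.2.length ≤ m → P h ∈ Set.Icc (0 : ℝ) 1) ∧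
  ∃ (S' : Type) (_ : Fintype S') (_ : DecidableEq S') (μ' : Env S' A O) (p : S' → ℝ),
    IsDetEnv μ' ∧ MCounterEquiv μ μ' m ∧ (∀ s', p s' ∈ Set.Icc (0 : ℝ) 1) ∧
    ∀ h : Hist A O, h.2.length ≤ m → P h = ∑ s', p s' * posterior μ' h s'

/-- First components: the history (in reverse chronological order) generated after `t`
turns in a deterministic environment given by functions `(Td, Od)`, starting from state
`s0` and following the deterministic policy `p`; second component: the state reached. -/
def genHistAux (Td : S → A → S) (Od : S → O) (p : Hist A O → A) (s0 : S) :
    ℕ → List (A × O) × S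
  | 0 => ([], s0)
  | t + 1 =>
      let r := genHistAux Td Od p s0 t
      let a := p (Od s0, r.1)
      let s' := Td r.2 a
      ((a, Od s') :: r.1, s')

/-- `f_{s0}(p)` truncated at length `t`: the unique history of length `t` generated from
the initial state `s0` by the deterministic policy `p` in the deterministic environment
given by the functions `(Td, Od)`. -/
def genHist (Td : S → A → S) (Od : S → O) (p : Hist A O → A) (s0 : S) (t : ℕ) :
    Hist A O :=
  (Od s0, (genHistAux Td Od p s0 t).1)

/-- The fiber `F(f_s)` (for `s` a state of the deterministic environment `(Td', Od')`):
all initial states `s0` of the deterministic environment `(Td, Od)` whose generated-history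
map `f_{s0} : Π₀ → H_m` equals `f_s`. -/
noncomputable def fiber [Fintype S] (Td : S → A → S) (Od : S → O)
    (Td' : S' → A → S') (Od' : S' → O) (m : ℕ) (s : S') : Finset S :=
  Finset.univ.filter fun s0 => ∀ p : Hist A O → A, genHist Td Od p s0 m = genHist Td' Od' p s m


section Aux

variable {S Sstar A O : Type}

/-- Product of indicators equals indicator of the universal statement. -/
lemma prodIndicatorAux {ι : Type*} [Fintype ι] (P : ι → Prop) :
    (∏ i, if P i then (1 : ℝ) else 0) = if ∀ i, P i then 1 else 0 := by
  by_cases h : ∀ i, P i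
  · rw [if_pos h]
    exact Finset.prod_eq_one fun i _ => by rw [if_pos (h i)]
  · rw [if_neg h]
    push_neg at h
    obtain ⟨i, hi⟩ := h
    exact Finset.prod_eq_zero (Finset.mem_univ i) (by rw [if_neg hi])

/-- The canonical deterministic environment policy determined by `(Td, Od)` and an
initial state. -/
def canonEp (Td : S → A → S) (Od : S → O) (m : ℕ) (s0 : S) : EnvPol S A O m :=
  (s0, fun s a _ => Td s a, fun s _ => Od s)

lemma envPolProb_eq [Fintype S] [DecidableEq S] [Fintype A] [DecidableEq A] [Fintype O] [DecidableEq O]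
    (μ : Env S A O) (m : ℕ) (Td : S → A → S) (Od : S → O)
    (hT : ∀ s a s', μ.T s a s' = if s' = Td s a then 1 else 0)
    (hO : ∀ s o, μ.Obs s o = if o = Od s then 1 else 0)
    (s0 : S) (f : S → A → Fin m → S) (g : S → Fin (m + 1) → O) :
    envPolProb μ ((s0, f, g) : EnvPol S A O m)
      = if f = (fun s a _ => Td s a) ∧ g = (fun s _ => Od s) then μ.T0 s0 else 0 := by
  have h1 : (∏ s, ∏ a, ∏ i, μ.T s a (f s a i))
      = if f = (fun s a _ => Td s a) then (1 : ℝ) else 0 := by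
    by_cases h : f = fun s a _ => Td s a
    · rw [if_pos h]
      refine Finset.prod_eq_one fun s _ => Finset.prod_eq_one fun a _ =>
        Finset.prod_eq_one fun i _ => ?_
      rw [hT, if_pos (by rw [h])]
    · rw [if_neg h]
      have : ∃ s a i, f s a i ≠ Td s a := by
        by_contra hc
        push_neg at hc
        exact h (by funext s a i; exact hc s a i)
      obtain ⟨s, a, i, hi⟩ := this
      refine Finset.prod_eq_zero (Finset.mem_univ s) ?_
      refine Finset.prod_eq_zero (Finset.mem_univ a) ?_
      refine Finset.prod_eq_zero (Finset.mem_univ i) ?_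
      rw [hT, if_neg hi]
  have h2 : (∏ s, ∏ i, μ.Obs s (g s i))
      = if g = (fun s _ => Od s) then (1 : ℝ) else 0 := by
    by_cases h : g = fun s _ => Od s
    · rw [if_pos h]
      refine Finset.prod_eq_one fun s _ => Finset.prod_eq_one fun i _ => ?_
      rw [hO, if_pos (by rw [h])]
    · rw [if_neg h]
      have : ∃ s i, g s i ≠ Od s := by
        by_contra hc
        push_neg at hc
        exact h (by funext s i; exact hc s i)
      obtain ⟨s, i, hi⟩ := this
      refine Finset.prod_eq_zero (Finset.mem_univ s) ?_
      refine Finset.prod_eq_zero (Finset.mem_univ i) ?_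
      rw [hO, if_neg hi]
  unfold envPolProb
  simp only at h1 h2 ⊢
  rw [h1, h2]
  by_cases hf : f = fun s a _ => Td s a
  · by_cases hg : g = fun s _ => Od s
    · rw [if_pos hf, if_pos hg, if_pos ⟨hf, hg⟩]; ring
    · rw [if_neg (show ¬((f = fun s a _ => Td s a) ∧ g = fun s _ => Od s)
        from fun hc => hg hc.2), if_neg hg]; ring
  · rw [if_neg (show ¬((f = fun s a _ => Td s a) ∧ g = fun s _ => Od s)
        from fun hc => hf hc.1), if_neg hf]; ring

/-- Summing a function against `envPolProb` of a deterministic environment reduces to a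
sum over initial states of the canonical environment policy. -/
lemma sum_envPolProb [Fintype S] [DecidableEq S] [Fintype A] [DecidableEq A] [Fintype O] [DecidableEq O]
    (μ : Env S A O) (m : ℕ) (Td : S → A → S) (Od : S → O)
    (hT : ∀ s a s', μ.T s a s' = if s' = Td s a then 1 else 0)
    (hO : ∀ s o, μ.Obs s o = if o = Od s then 1 else 0)
    (F : EnvPol S A O m → ℝ) :
    ∑ ep : EnvPol S A O m, envPolProb μ ep * F ep
      = ∑ s0, μ.T0 s0 * F (canonEp Td Od m s0) := by
  rw [Fintype.sum_prod_type]
  refine Finset.sum_congr rfl fun s0 _ => ?_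
  rw [Fintype.sum_prod_type]
  rw [Finset.sum_eq_single_of_mem (fun s a _ => Td s a) (Finset.mem_univ _) ?h1]
  case h1 =>
    intro f _ hf
    refine Finset.sum_eq_zero fun g _ => ?_
    rw [envPolProb_eq μ m Td Od hT hO, if_neg (by tauto), zero_mul]
  rw [Finset.sum_eq_single_of_mem (fun s _ => Od s) (Finset.mem_univ _) ?h2]
  case h2 =>
    intro g _ hg
    rw [envPolProb_eq μ m Td Od hT hO, if_neg (by tauto), zero_mul]
  rw [envPolProb_eq μ m Td Od hT hO, if_pos ⟨rfl, rfl⟩]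
  rfl

/-- The generated history has the right length. -/
lemma genHistAux_length (Td : S → A → S) (Od : S → O) (p : Hist A O → A) (s0 : S) :
    ∀ t, (genHistAux Td Od p s0 t).1.length = t := by
  intro t
  induction t with
  | zero => rfl
  | succ t ih => simp [genHistAux, ih]

/-- The generated history only depends on the policy through histories of length `< m`. -/
lemma genHistAux_congr (Td : S → A → S) (Od : S → O) (p p' : Hist A O → A) (s0 : S)
    (m : ℕ) (hpp : ∀ h : Hist A O, h.2.length < m → p h = p' h) :
    ∀ t, t ≤ m → genHistAux Td Od p s0 t = genHistAux Td Od p' s0 t := by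
  intro t
  induction t with
  | zero => intro _; rfl
  | succ t ih =>
    intro ht
    have h1 := ih (by omega)
    have h2 : p (Od s0, (genHistAux Td Od p' s0 t).1)
        = p' (Od s0, (genHistAux Td Od p' s0 t).1) := by
      refine hpp _ ?_
      simp only [genHistAux_length]
      omega
    simp only [genHistAux, h1, h2]

lemma genHist_congr (Td : S → A → S) (Od : S → O) (p p' : Hist A O → A) (s0 : S)
    (m : ℕ) (hpp : ∀ h : Hist A O, h.2.length < m → p h = p' h) :
    genHist Td Od p s0 m = genHist Td Od p' s0 m := by
  unfold genHist
  rw [genHistAux_congr Td Od p p' s0 m hpp m le_rfl]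

/-- The deterministic policy given by a choice function. -/
noncomputable def detPolicy [Fintype A] (pd : Hist A O → A) : Policy A O where
  act h a := if a = pd h then 1 else 0
  nonneg h a := by split <;> norm_num
  sum_one h := by simp

lemma epState_canonEp (Td : S → A → S) (Od : S → O) (m : ℕ) (s0 : S)
    (pd : Hist A O → A) (o0 : O) :
    ∀ l : List (A × O), l.length ≤ m →
      (o0, l) = genHist Td Od pd s0 l.length →
      epState (canonEp Td Od m s0) l = (genHistAux Td Od pd s0 l.length).2 := by
  intro l
  induction l with
  | nil => intro _ _; rfl
  | cons ao rest ih =>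
    obtain ⟨a, o⟩ := ao
    intro hlen hmatch
    have hrl : rest.length < m := by simp at hlen; omega
    simp only [genHist, genHistAux, List.length_cons, Prod.mk.injEq, List.cons.injEq] at hmatch
    obtain ⟨ho0, ⟨ha, ho⟩, hrest⟩ := hmatch
    have hm' : (o0, rest) = genHist Td Od pd s0 rest.length := by
      simp only [genHist, Prod.mk.injEq]
      exact ⟨ho0, hrest⟩
    have hst := ih (by omega) hm'
    simp only [epState, dif_pos hrl]
    show Td (epState (canonEp Td Od m s0) rest) a
        = (genHistAux Td Od pd s0 (rest.length + 1)).2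
    rw [hst, ha]
    rfl

lemma epHistProb_canonEp [Fintype A] (Td : S → A → S) (Od : S → O) (m : ℕ) (s0 : S)
    (pd : Hist A O → A) (o0 : O) :
    ∀ l : List (A × O), l.length ≤ m →
      epHistProb (canonEp Td Od m s0) (detPolicy pd) o0 l
        = if (o0, l) = genHist Td Od pd s0 l.length then 1 else 0 := by
  intro l
  induction l with
  | nil =>
    intro _
    simp only [epHistProb, genHist, genHistAux]
    show (if Od s0 = o0 then (1:ℝ) else 0) = _
    by_cases h : o0 = Od s0
    · rw [if_pos h.symm]; symm; exact if_pos (by subst h; rfl)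
    · rw [if_neg (fun hc => h hc.symm)]; symm
      exact if_neg (fun hc => h (congrArg Prod.fst hc))
  | cons ao rest ih =>
    obtain ⟨a, o⟩ := ao
    intro hlen
    have hrl : rest.length < m := by simp at hlen; omega
    simp only [epHistProb, dif_pos hrl]
    rw [ih (by omega)]
    by_cases hm' : (o0, rest) = genHist Td Od pd s0 rest.length
    · rw [if_pos hm']
      have hst := epState_canonEp Td Od m s0 pd o0 rest (by omega) hm'
      simp only [genHist, Prod.mk.injEq] at hm'
      obtain ⟨ho0, hrest⟩ := hm'
      obtain ⟨t, ht⟩ : ∃ t, rest.length = t := ⟨_, rfl⟩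
      rw [ht] at hrest hst
      subst hrest
      subst ho0
      show (1 : ℝ) * (detPolicy pd).act (Od s0, (genHistAux Td Od pd s0 t).1) a *
          (if Od (Td (epState (canonEp Td Od m s0) (genHistAux Td Od pd s0 t).1) a)
              = o then 1 else 0)
        = _
      rw [one_mul, hst]
      have hdp : (detPolicy pd).act (Od s0, (genHistAux Td Od pd s0 t).1) a
          = if a = pd (Od s0, (genHistAux Td Od pd s0 t).1) then 1 else 0 := rfl
      rw [hdp]
      have hlc : ((a, o) :: (genHistAux Td Od pd s0 t).1).length = t + 1 := by
        rw [List.length_cons, genHistAux_length]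
      rw [hlc]
      have hrhs : ((Od s0, (a, o) :: (genHistAux Td Od pd s0 t).1)
            = genHist Td Od pd s0 (t + 1))
          ↔ (a = pd (Od s0, (genHistAux Td Od pd s0 t).1) ∧
              Od (Td (genHistAux Td Od pd s0 t).2
                (pd (Od s0, (genHistAux Td Od pd s0 t).1))) = o) := by
        simp only [genHist, genHistAux, Prod.mk.injEq, List.cons.injEq, true_and, and_true]
        constructor
        · rintro ⟨h1, h2⟩
          exact ⟨h1, h2.symm⟩
        · rintro ⟨h1, h2⟩
          exact ⟨h1, h2.symm⟩
      by_cases ha : a = pd (Od s0, (genHistAux Td Od pd s0 t).1)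
      · rw [if_pos ha]
        by_cases ho : Od (Td (genHistAux Td Od pd s0 t).2 a) = o
        · rw [if_pos ho, if_pos (hrhs.2 ⟨ha, ha ▸ ho⟩), one_mul]
        · rw [if_neg ho, if_neg (fun hc => ho (by rw [ha]; exact (hrhs.1 hc).2)), one_mul]
      · rw [if_neg ha, zero_mul, if_neg (fun hc => ha (hrhs.1 hc).1)]
    · rw [if_neg hm', zero_mul, zero_mul]
      rw [if_neg ?_]
      intro hc
      apply hm'
      simp only [List.length_cons, genHist, genHistAux, Prod.mk.injEq, List.cons.injEq] at hc
      obtain ⟨ho0, _, hrest⟩ := hc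
      simp only [genHist, Prod.mk.injEq]
      exact ⟨ho0, hrest⟩

/-- Encoding of histories of bounded length. -/
def histCode (m : ℕ) (h : Hist A O) : O × (Fin m → Option (A × O)) :=
  (h.1, fun i => h.2[(i : ℕ)]?)

lemma histCode_inj (m : ℕ) (h h' : Hist A O) (hh : h.2.length ≤ m)
    (hh' : h'.2.length ≤ m) (heq : histCode m h = histCode m h') : h = h' := by
  unfold histCode at heq
  rw [Prod.ext_iff] at heq
  obtain ⟨h1, h2⟩ := heq
  have h2' : ∀ i : Fin m, h.2[(i : ℕ)]? = h'.2[(i : ℕ)]? := fun i => congrFun h2 i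
  refine Prod.ext h1 (List.ext_getElem? fun n => ?_)
  by_cases hn : n < m
  · exact h2' ⟨n, hn⟩
  · rw [List.getElem?_eq_none_iff.2 (by omega), List.getElem?_eq_none_iff.2 (by omega)]

/-- Decode a policy-code into a policy. -/
noncomputable def decodePol (m : ℕ) (g : (O × (Fin m → Option (A × O))) → A) :
    Hist A O → A :=
  fun h => g (histCode m h)

/-- Any policy agrees with a decoded one on short histories. -/
lemma exists_code (m : ℕ) (p : Hist A O → A) (o₀ : O) :
    ∃ g : (O × (Fin m → Option (A × O))) → A,
      ∀ h : Hist A O, h.2.length < m → decodePol m g h = p h := by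
  refine ⟨fun c => if hc : ∃ h : Hist A O, h.2.length < m ∧ histCode m h = c
    then p hc.choose else p (o₀, []), ?_⟩
  intro h hh
  have hex : ∃ h' : Hist A O, h'.2.length < m ∧ histCode m h' = histCode m h := ⟨h, hh, rfl⟩
  show (if hc : ∃ h' : Hist A O, h'.2.length < m ∧ histCode m h' = histCode m h
      then p hc.choose else p (o₀, [])) = p h
  rw [dif_pos hex]
  congr 1
  exact histCode_inj m hex.choose h (le_of_lt hex.choose_spec.1) (le_of_lt hh)
    hex.choose_spec.2

/-- Nonemptiness facts. -/
lemma env_S_nonempty [Fintype S] [Fintype A] [Fintype O] (μ : Env S A O) : Nonempty S := by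
  by_contra h
  have : (∑ s : S, μ.T0 s) = 0 := Finset.sum_eq_zero fun s _ => absurd ⟨s⟩ h
  rw [μ.T0_sum] at this
  norm_num at this

lemma env_O_nonempty [Fintype S] [Fintype A] [Fintype O] (μ : Env S A O) : Nonempty O := by
  obtain ⟨s⟩ := env_S_nonempty μ
  by_contra h
  have : (∑ o : O, μ.Obs s o) = 0 := Finset.sum_eq_zero fun o _ => absurd ⟨o⟩ h
  rw [μ.Obs_sum] at this
  norm_num at this

noncomputable def cind (p : Prop) : ℝ := if p then 1 else 0

lemma cind_pos {p : Prop} (h : p) : cind p = 1 := by simp [cind, h]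

lemma cind_neg {p : Prop} (h : ¬p) : cind p = 0 := by simp [cind, h]

lemma ite_eq_cind (p : Prop) [Decidable p] : (if p then (1 : ℝ) else 0) = cind p := by
  by_cases h : p
  · rw [if_pos h, cind_pos h]
  · rw [if_neg h, cind_neg h]

lemma prod_cind {ι : Type*} [Fintype ι] (P : ι → Prop) :
    (∏ i, cind (P i)) = cind (∀ i, P i) := by
  by_cases h : ∀ i, P i
  · rw [cind_pos h]
    exact Finset.prod_eq_one fun i _ => cind_pos (h i)
  · rw [cind_neg h]
    push_neg at h
    obtain ⟨i, hi⟩ := h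
    exact Finset.prod_eq_zero (Finset.mem_univ i) (cind_neg hi)

lemma sum_mul_cind {ι : Type*} [Fintype ι] (F : Finset ι) (f : ι → ℝ) :
    ∑ x ∈ F, f x = ∑ x : ι, f x * cind (x ∈ F) := by
  have h1 : (∑ x : ι, f x * cind (x ∈ F)) = ∑ x : ι, if x ∈ F then f x else 0 := by
    refine Finset.sum_congr rfl fun x _ => ?_
    by_cases h : x ∈ F
    · rw [cind_pos h, mul_one, if_pos h]
    · rw [cind_neg h, mul_zero, if_neg h]
  rw [h1, Finset.sum_ite_mem, Finset.univ_inter]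

/-- The key lemma: the initial mass of a fiber is the same in two counterfactually
equivalent deterministic environments. -/
lemma fiber_mass_eq [Fintype S] [DecidableEq S] [Fintype Sstar] [DecidableEq Sstar]
    [Fintype A] [DecidableEq A] [Fintype O]
    (μ : Env S A O) (μstar : Env Sstar A O) (m : ℕ)
    (Td : S → A → S) (Od : S → O)
    (hT : ∀ s a s', μ.T s a s' = if s' = Td s a then 1 else 0)
    (hO : ∀ s o, μ.Obs s o = if o = Od s then 1 else 0)
    (Tds : Sstar → A → Sstar) (Ods : Sstar → O)
    (hTs : ∀ s a s', μstar.T s a s' = if s' = Tds s a then 1 else 0)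
    (hOs : ∀ s o, μstar.Obs s o = if o = Ods s then 1 else 0)
    (hce : MCounterEquiv μ μstar m) (s : S) :
    ∑ s' ∈ fiber Td Od Td Od m s, μ.T0 s'
      = ∑ sstar ∈ fiber Tds Ods Td Od m s, μstar.T0 sstar := by
  obtain ⟨o₀⟩ := env_O_nonempty μ
  set G := (O × (Fin m → Option (A × O))) → A with hG
  set n := Fintype.card G with hn
  set e : Fin n → G := fun i => (Fintype.equivFin G).symm i with he
  set pd : Fin n → (Hist A O → A) := fun i => decodePol m (e i) with hpd
  set hs : Fin n → Hist A O := fun i => genHist Td Od (pd i) s m with hhs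
  set πs : Fin n → Policy A O := fun i => detPolicy (pd i) with hπs
  have hlen : ∀ i, (hs i).2.length = m := fun i => genHistAux_length Td Od (pd i) s m
  have key := hce n hs πs (fun i => le_of_eq (hlen i))
  rw [sum_envPolProb μ m Td Od hT hO, sum_envPolProb μstar m Tds Ods hTs hOs] at key
  -- rewrite products as fiber indicators
  have hprod : ∀ s0 : S,
      (∏ i, epHistProb (canonEp Td Od m s0) (πs i) (hs i).1 (hs i).2)
        = cind (s0 ∈ fiber Td Od Td Od m s) := by
    intro s0
    have h1 : ∀ i, epHistProb (canonEp Td Od m s0) (πs i) (hs i).1 (hs i).2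
        = cind (hs i = genHist Td Od (pd i) s0 m) := by
      intro i
      rw [show πs i = detPolicy (pd i) from rfl,
        epHistProb_canonEp Td Od m s0 (pd i) (hs i).1 (hs i).2 (le_of_eq (hlen i)), hlen i,
        ite_eq_cind, Prod.mk.eta]
    simp only [h1]
    rw [prod_cind]
    congr 1
    simp only [eq_iff_iff]
    constructor
    · intro hall
      simp only [fiber, Finset.mem_filter, Finset.mem_univ, true_and]
      intro p
      obtain ⟨g, hg⟩ := exists_code m p o₀
      set i := (Fintype.equivFin G) g with hi
      have hei : e i = g := Equiv.symm_apply_apply _ _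
      have hagree : ∀ h : Hist A O, h.2.length < m → pd i h = p h := by
        intro h hh
        show decodePol m (e i) h = p h
        rw [hei]
        exact hg h hh
      calc genHist Td Od p s0 m = genHist Td Od (pd i) s0 m :=
            (genHist_congr Td Od (pd i) p s0 m hagree).symm
        _ = hs i := (hall i).symm
        _ = genHist Td Od (pd i) s m := rfl
        _ = genHist Td Od p s m := genHist_congr Td Od (pd i) p s m hagree
    · intro hmem i
      simp only [fiber, Finset.mem_filter, Finset.mem_univ, true_and] at hmem
      exact (hmem (pd i)).symm
  have hprods : ∀ s0 : Sstar,
      (∏ i, epHistProb (canonEp Tds Ods m s0) (πs i) (hs i).1 (hs i).2)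
        = cind (s0 ∈ fiber Tds Ods Td Od m s) := by
    intro s0
    have h1 : ∀ i, epHistProb (canonEp Tds Ods m s0) (πs i) (hs i).1 (hs i).2
        = cind (hs i = genHist Tds Ods (pd i) s0 m) := by
      intro i
      rw [show πs i = detPolicy (pd i) from rfl,
        epHistProb_canonEp Tds Ods m s0 (pd i) (hs i).1 (hs i).2 (le_of_eq (hlen i)), hlen i,
        ite_eq_cind, Prod.mk.eta]
    simp only [h1]
    rw [prod_cind]
    congr 1
    simp only [eq_iff_iff]
    constructor
    · intro hall
      simp only [fiber, Finset.mem_filter, Finset.mem_univ, true_and]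
      intro p
      obtain ⟨g, hg⟩ := exists_code m p o₀
      set i := (Fintype.equivFin G) g with hi
      have hei : e i = g := Equiv.symm_apply_apply _ _
      have hagree : ∀ h : Hist A O, h.2.length < m → pd i h = p h := by
        intro h hh
        show decodePol m (e i) h = p h
        rw [hei]
        exact hg h hh
      calc genHist Tds Ods p s0 m = genHist Tds Ods (pd i) s0 m :=
            (genHist_congr Tds Ods (pd i) p s0 m hagree).symm
        _ = hs i := (hall i).symm
        _ = genHist Td Od (pd i) s m := rfl
        _ = genHist Td Od p s m := genHist_congr Td Od (pd i) p s m hagree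
    · intro hmem i
      simp only [fiber, Finset.mem_filter, Finset.mem_univ, true_and] at hmem
      exact (hmem (pd i)).symm
  simp only [hprod, hprods] at key
  rw [sum_mul_cind (fiber Td Od Td Od m s) μ.T0,
    sum_mul_cind (fiber Tds Ods Td Od m s) μstar.T0]
  exact key

end Aux

/-- Let `μ` and `μ*` be deterministic environments (kernels the point
masses of `(Td, Od)` and `(Tds, Ods)`) that are `m`-counterfactually equivalent, with
fibers `F(f_s)` and `F*(f_s)` of the generated-history maps, and constants `p_s ∈ [0,1]`.
If `p_{s*}` is defined, for `s* ∈ F*(f_s)` with `T₀*(s*) ≠ 0` and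
`∑_{s'∈F(f_s)} T₀(s') > 0`, as the weighted average
`(∑_{s'∈F(f_s)} T₀(s') p_{s'}) / (∑_{s'∈F(f_s)} T₀(s'))`, then for every `s ∈ S`,
`∑_{s*∈F*(f_s)} T₀*(s*) p_{s*} = ∑_{s'∈F(f_s)} T₀(s') p_{s'}`. -/
theorem fiber_weighted_average
    {S Sstar A O : Type} [Fintype S] [DecidableEq S] [Fintype Sstar] [DecidableEq Sstar]
    [Fintype A] [DecidableEq A] [Fintype O]
    (μ : Env S A O) (μstar : Env Sstar A O) (m : ℕ)
    (Td : S → A → S) (Od : S → O)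
    (hT : ∀ s a s', μ.T s a s' = if s' = Td s a then 1 else 0)
    (hO : ∀ s o, μ.Obs s o = if o = Od s then 1 else 0)
    (Tds : Sstar → A → Sstar) (Ods : Sstar → O)
    (hTs : ∀ s a s', μstar.T s a s' = if s' = Tds s a then 1 else 0)
    (hOs : ∀ s o, μstar.Obs s o = if o = Ods s then 1 else 0)
    (hce : MCounterEquiv μ μstar m)
    (pc : S → ℝ) (hpc : ∀ s, pc s ∈ Set.Icc (0 : ℝ) 1)
    (pstar : Sstar → ℝ)
    (hpstar : ∀ (s : S) (sstar : Sstar),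
      sstar ∈ fiber Tds Ods Td Od m s →
      μstar.T0 sstar ≠ 0 →
      0 < ∑ s' ∈ fiber Td Od Td Od m s, μ.T0 s' →
      pstar sstar
        = (∑ s' ∈ fiber Td Od Td Od m s, μ.T0 s' * pc s')
            / ∑ s' ∈ fiber Td Od Td Od m s, μ.T0 s') :
    ∀ s : S,
      ∑ sstar ∈ fiber Tds Ods Td Od m s, μstar.T0 sstar * pstar sstar
        = ∑ s' ∈ fiber Td Od Td Od m s, μ.T0 s' * pc s' := by
  intro s
  have hmass := fiber_mass_eq μ μstar m Td Od hT hO Tds Ods hTs hOs hce s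
  by_cases hM : 0 < ∑ s' ∈ fiber Td Od Td Od m s, μ.T0 s'
  · have hLHS : ∑ sstar ∈ fiber Tds Ods Td Od m s, μstar.T0 sstar * pstar sstar
        = ∑ sstar ∈ fiber Tds Ods Td Od m s, μstar.T0 sstar *
            ((∑ s' ∈ fiber Td Od Td Od m s, μ.T0 s' * pc s')
              / ∑ s' ∈ fiber Td Od Td Od m s, μ.T0 s') := by
      refine Finset.sum_congr rfl fun sstar hmem => ?_
      by_cases h0 : μstar.T0 sstar = 0
      · rw [h0, zero_mul, zero_mul]
      · rw [hpstar s sstar hmem h0 hM]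
    rw [hLHS, ← Finset.sum_mul, ← hmass, mul_comm,
      div_mul_cancel₀ _ (ne_of_gt hM)]
  · have hnn : ∀ s' ∈ fiber Td Od Td Od m s, 0 ≤ μ.T0 s' := fun s' _ => μ.T0_nonneg s'
    have hM0 : ∑ s' ∈ fiber Td Od Td Od m s, μ.T0 s' = 0 :=
      le_antisymm (not_lt.1 hM) (Finset.sum_nonneg hnn)
    have hz := (Finset.sum_eq_zero_iff_of_nonneg hnn).1 hM0
    have hzs : ∀ sstar ∈ fiber Tds Ods Td Od m s, μstar.T0 sstar = 0 := by
      have h0 : ∑ sstar ∈ fiber Tds Ods Td Od m s, μstar.T0 sstar = 0 := by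
        rw [← hmass]; exact hM0
      exact (Finset.sum_eq_zero_iff_of_nonneg (fun x _ => μstar.T0_nonneg x)).1 h0
    rw [Finset.sum_eq_zero (fun x hx => by rw [hzs x hx, zero_mul]),
      Finset.sum_eq_zero (fun x hx => by rw [hz x hx, zero_mul])]
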